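/- Fix an integer d ≥ 2 and a norm ‖·‖ on ℝ^d. Then the class of finite subsets of (ℝ^d, ‖·‖) does not have the qualitative dichotomy property: there exists a metric space H such that 1 < sup{c_H(S) : S a finite nonempty subset of (ℝ^d,‖·‖)} < ∞. -/

import Mathlib

open scoped Classical in
/-- The Lipschitz norm `‖f‖_Lip = sup_{x ≠ y} d(f x, f y) / d(x, y)` of a map between
(pseudo)metric spaces. -/
noncomputable def lipNorm {X H : Type*} [PseudoMetricSpace X] [PseudoMetricSpace H]
    (f : X → H) : ℝ :=
  ⨆ p : X × X, if p.1 = p.2 then 0 else dist (f p.1) (f p.2) / dist p.1 p.2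

open scoped Classical in
/-- The Lipschitz norm of the inverse of an injective map `f`, i.e.
`‖f⁻¹‖_Lip = sup_{x ≠ y} d(x, y) / d(f x, f y)`. -/
noncomputable def colipNorm {X H : Type*} [PseudoMetricSpace X] [PseudoMetricSpace H]
    (f : X → H) : ℝ :=
  ⨆ p : X × X, if p.1 = p.2 then 0 else dist p.1 p.2 / dist (f p.1) (f p.2)

/-- The distortion `dist(f) = ‖f‖_Lip * ‖f⁻¹‖_Lip` of an (injective) map between metric spaces. -/
noncomputable def distortion {X H : Type*} [PseudoMetricSpace X] [PseudoMetricSpace H]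
    (f : X → H) : ℝ := lipNorm f * colipNorm f

/-- `sup {c_H S : S ⊆ E finite nonempty} < ∞`, witnessed by the bound `K`: every finite
nonempty subset of `E` embeds into `H` with distortion at most `K`. -/
def embedsAllFiniteSubsetsWith (E : Type*) [NormedAddCommGroup E]
    (H : Type) [MetricSpace H] (K : ℝ) : Prop :=
  ∀ S : Set E, S.Finite → S.Nonempty → ∃ f : S → H, Function.Injective f ∧ distortion f ≤ K

/-- Some finite nonempty subset `S` of `E` has `c_H S ≥ L`: every injective map `S → H` has
distortion at least `L`. -/
def someFiniteSubsetNeeds (E : Type*) [NormedAddCommGroup E]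
    (H : Type) [MetricSpace H] (L : ℝ) : Prop :=
  ∃ S : Set E, S.Finite ∧ S.Nonempty ∧ ∀ f : S → H, Function.Injective f → L ≤ distortion f


open scoped Classical

section helpers
variable {X H : Type*} [MetricSpace X] [MetricSpace H]

lemma lipNorm_nonneg (f : X → H) : 0 ≤ lipNorm f :=
  Real.iSup_nonneg fun p => by split <;> positivity

lemma colipNorm_nonneg (f : X → H) : 0 ≤ colipNorm f :=
  Real.iSup_nonneg fun p => by split <;> positivity

lemma dist_le_lip [Finite X] (f : X → H) {p q : X} (hpq : p ≠ q) :
    dist (f p) (f q) ≤ lipNorm f * dist p q := by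
  have hb : BddAbove (Set.range fun pp : X × X =>
      if pp.1 = pp.2 then 0 else dist (f pp.1) (f pp.2) / dist pp.1 pp.2) :=
    (Set.finite_range _).bddAbove
  have h := le_ciSup hb (p, q)
  rw [if_neg hpq] at h
  have hd : (0:ℝ) < dist p q := dist_pos.mpr hpq
  calc dist (f p) (f q) = dist (f p) (f q) / dist p q * dist p q := by field_simp
    _ ≤ lipNorm f * dist p q := mul_le_mul_of_nonneg_right h hd.le

lemma dist_le_colip [Finite X] (f : X → H) {p q : X} (hf : Function.Injective f) (hpq : p ≠ q) :
    dist p q ≤ colipNorm f * dist (f p) (f q) := by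
  have hb : BddAbove (Set.range fun pp : X × X =>
      if pp.1 = pp.2 then 0 else dist pp.1 pp.2 / dist (f pp.1) (f pp.2)) :=
    (Set.finite_range _).bddAbove
  have h := le_ciSup hb (p, q)
  rw [if_neg hpq] at h
  have hd : (0:ℝ) < dist (f p) (f q) := dist_pos.mpr (fun he => hpq (hf he))
  calc dist p q = dist p q / dist (f p) (f q) * dist (f p) (f q) := by field_simp
    _ ≤ colipNorm f * dist (f p) (f q) := mul_le_mul_of_nonneg_right h hd.le

end helpers

lemma sdi {F : Type*} [NormedAddCommGroup F] [InnerProductSpace ℝ F] (a b c d : F) :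
    dist a c ^ 2 + dist b d ^ 2 ≤
      dist a b ^ 2 + dist b c ^ 2 + dist c d ^ 2 + dist d a ^ 2 := by
  simp only [dist_eq_norm]
  have key : ∀ x y : F, ‖x - y‖ ^ 2 = ‖x‖ ^ 2 - 2 * inner ℝ x y + ‖y‖ ^ 2 := fun x y => by
    rw [norm_sub_sq_real]
  have h1 := key a b; have h2 := key b c; have h3 := key c d; have h4 := key d a
  have h5 := key a c; have h6 := key b d
  have h7 : (0:ℝ) ≤ ‖(a - b) + (c - d)‖ ^ 2 := sq_nonneg _
  have h8 : ‖(a - b) + (c - d)‖ ^ 2 = ‖a - b‖^2 + 2 * inner ℝ (a - b) (c - d) + ‖c - d‖^2 :=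
    norm_add_sq_real _ _
  have h9 : (inner ℝ (a - b) (c - d) : ℝ)
      = inner ℝ a c - inner ℝ a d - inner ℝ b c + inner ℝ b d := by
    simp only [inner_sub_left, inner_sub_right]; ring
  nlinarith [h7, h8, h9, h1, h2, h3, h4, h5, h6, real_inner_comm b a, real_inner_comm c b,
    real_inner_comm d c, real_inner_comm a d, real_inner_comm c a, real_inner_comm d b]

lemma sq_helper {x y c : ℝ} (hx : 0 ≤ x) (h : x ≤ c * y) : x ^ 2 ≤ c ^ 2 * y ^ 2 := by
  have h2 := pow_le_pow_left₀ hx h 2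
  calc x ^ 2 ≤ (c * y) ^ 2 := h2
    _ = c ^ 2 * y ^ 2 := by ring

/-- Case B lower bound. -/
lemma caseB_lower {E : Type*} [NormedAddCommGroup E] (n : ℕ)
    {a b c d : E} (hab : a ≠ b) (hac : a ≠ c) (had : a ≠ d) (hbc : b ≠ c) (hbd : b ≠ d)
    (hcd : c ≠ d)
    (hviol : dist a b ^ 2 + dist b c ^ 2 + dist c d ^ 2 + dist d a ^ 2 <
      dist a c ^ 2 + dist b d ^ 2) :
    ∃ ε : ℝ, 0 < ε ∧ ∃ S : Set E, S.Finite ∧ S.Nonempty ∧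
      ∀ f : S → EuclideanSpace ℝ (Fin n), Function.Injective f → 1 + ε ≤ distortion f := by
  obtain ⟨Ps, hPs⟩ : ∃ x : ℝ, dist a b ^ 2 + dist b c ^ 2 + dist c d ^ 2 + dist d a ^ 2 = x :=
    ⟨_, rfl⟩
  obtain ⟨Pd, hPd⟩ : ∃ x : ℝ, dist a c ^ 2 + dist b d ^ 2 = x := ⟨_, rfl⟩
  rw [hPs, hPd] at hviol
  have hPs0 : 0 < Ps := by
    have h1 : (0:ℝ) < dist a b := dist_pos.mpr hab
    have h2 : (0:ℝ) ≤ dist b c := dist_nonneg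
    have h3 : (0:ℝ) ≤ dist c d := dist_nonneg
    have h4 : (0:ℝ) ≤ dist d a := dist_nonneg
    nlinarith [hPs]
  have hεpos : 0 < min 1 ((Pd - Ps) / (3 * Ps)) :=
    lt_min one_pos (div_pos (by linarith) (by positivity))
  refine ⟨min 1 ((Pd - Ps) / (3 * Ps)), hεpos, {a, b, c, d}, ?_, ⟨a, by simp⟩, ?_⟩
  · exact (Set.finite_singleton d).insert c |>.insert b |>.insert a
  · intro f hf
    haveI : Finite ↥({a, b, c, d} : Set E) :=
      Set.Finite.to_subtype ((Set.finite_singleton d).insert c |>.insert b |>.insert a)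
    set ε : ℝ := min 1 ((Pd - Ps) / (3 * Ps)) with hε
    have hε1 : ε ≤ 1 := min_le_left _ _
    have hε0 : 0 < ε := hεpos
    set L := lipNorm f with hL
    set C := colipNorm f with hC
    have hL0 : 0 ≤ L := lipNorm_nonneg f
    have hC0 : 0 ≤ C := colipNorm_nonneg f
    have hεr : ε ≤ (Pd - Ps) / (3 * Ps) := min_le_right _ _
    show 1 + ε ≤ distortion f
    have hdist : distortion f = L * C := rfl
    rw [hdist]
    have hma : a ∈ ({a, b, c, d} : Set E) := by simp
    have hmb : b ∈ ({a, b, c, d} : Set E) := by simp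
    have hmc : c ∈ ({a, b, c, d} : Set E) := by simp
    have hmd : d ∈ ({a, b, c, d} : Set E) := by simp
    set ea : ({a, b, c, d} : Set E) := ⟨a, hma⟩ with hea
    set eb : ({a, b, c, d} : Set E) := ⟨b, hmb⟩ with heb
    set ec : ({a, b, c, d} : Set E) := ⟨c, hmc⟩ with hec
    set ed : ({a, b, c, d} : Set E) := ⟨d, hmd⟩ with hed
    have hab' : ea ≠ eb := fun h => hab (congrArg Subtype.val h)
    have hbc' : eb ≠ ec := fun h => hbc (congrArg Subtype.val h)
    have hcd' : ec ≠ ed := fun h => hcd (congrArg Subtype.val h)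
    have hda' : ed ≠ ea := fun h => had (congrArg Subtype.val h).symm
    have hac' : ea ≠ ec := fun h => hac (congrArg Subtype.val h)
    have hbd' : eb ≠ ed := fun h => hbd (congrArg Subtype.val h)
    have hs1 : dist (f ea) (f eb) ≤ L * dist a b := by
      simpa [Subtype.dist_eq, hea, heb] using dist_le_lip f hab'
    have hs2 : dist (f eb) (f ec) ≤ L * dist b c := by
      simpa [Subtype.dist_eq, heb, hec] using dist_le_lip f hbc'
    have hs3 : dist (f ec) (f ed) ≤ L * dist c d := by
      simpa [Subtype.dist_eq, hec, hed] using dist_le_lip f hcd'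
    have hs4 : dist (f ed) (f ea) ≤ L * dist d a := by
      simpa [Subtype.dist_eq, hed, hea] using dist_le_lip f hda'
    have hd1 : dist a c ≤ C * dist (f ea) (f ec) := by
      simpa [Subtype.dist_eq, hea, hec] using dist_le_colip f hf hac'
    have hd2 : dist b d ≤ C * dist (f eb) (f ed) := by
      simpa [Subtype.dist_eq, heb, hed] using dist_le_colip f hf hbd'
    have hsdi := sdi (f ea) (f eb) (f ec) (f ed)
    clear_value ε L C
    have sq1 : dist a c ^ 2 ≤ C ^ 2 * dist (f ea) (f ec) ^ 2 := sq_helper dist_nonneg hd1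
    have sq2 : dist b d ^ 2 ≤ C ^ 2 * dist (f eb) (f ed) ^ 2 := sq_helper dist_nonneg hd2
    have sq3 : dist (f ea) (f eb) ^ 2 ≤ L ^ 2 * dist a b ^ 2 := sq_helper dist_nonneg hs1
    have sq4 : dist (f eb) (f ec) ^ 2 ≤ L ^ 2 * dist b c ^ 2 := sq_helper dist_nonneg hs2
    have sq5 : dist (f ec) (f ed) ^ 2 ≤ L ^ 2 * dist c d ^ 2 := sq_helper dist_nonneg hs3
    have sq6 : dist (f ed) (f ea) ^ 2 ≤ L ^ 2 * dist d a ^ 2 := sq_helper dist_nonneg hs4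
    have himg : dist (f ea) (f ec) ^ 2 + dist (f eb) (f ed) ^ 2 ≤ L^2 * Ps := by
      rw [← hPs]; linarith [hsdi, sq3, sq4, sq5, sq6]
    have hmain : Pd ≤ C^2 * (L^2 * Ps) := by
      have h := mul_le_mul_of_nonneg_left himg (sq_nonneg C)
      rw [← hPd]; linarith [sq1, sq2, h]
    rcases le_or_gt 2 (L * C) with h2 | h2
    · linarith
    · have hε3 : ε * (3 * Ps) ≤ Pd - Ps := (le_div_iff₀ (by positivity)).mp hεr
      have hsq : (1 + ε)^2 * Ps ≤ (L * C)^2 * Ps := by nlinarith [hmain, hε3, hε0, hε1, hPs0]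
      have hsq' : (1 + ε)^2 ≤ (L * C)^2 := le_of_mul_le_mul_right hsq hPs0
      have h4 : (0:ℝ) ≤ 1 + ε := by linarith
      have h5 : 0 ≤ L * C := mul_nonneg hL0 hC0
      exact (pow_le_pow_iff_left₀ h4 h5 two_ne_zero).mp hsq'

section upper
variable {E F : Type*} [NormedAddCommGroup E] [NormedSpace ℝ E]
  [NormedAddCommGroup F] [NormedSpace ℝ F]

lemma distortion_restrict_le (e : E ≃L[ℝ] F) (S : Set E) (hne : S.Nonempty) :
    distortion (fun s : S => e s) ≤ ‖(e : E →L[ℝ] F)‖ * ‖(e.symm : F →L[ℝ] E)‖ := by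
  haveI : Nonempty S := hne.to_subtype
  have hlip : lipNorm (fun s : S => e s) ≤ ‖(e : E →L[ℝ] F)‖ := by
    apply ciSup_le
    rintro ⟨p, q⟩
    dsimp only
    split
    · exact norm_nonneg _
    · rename_i hpq
      have hd : (0:ℝ) < dist p q := dist_pos.mpr hpq
      rw [div_le_iff₀ hd]
      rw [Subtype.dist_eq, dist_eq_norm, dist_eq_norm]
      calc ‖e p - e q‖ = ‖e ((p:E) - q)‖ := by rw [map_sub]
        _ ≤ ‖(e : E →L[ℝ] F)‖ * ‖(p:E) - q‖ := (e : E →L[ℝ] F).le_opNorm _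
  have hcolip : colipNorm (fun s : S => e s) ≤ ‖(e.symm : F →L[ℝ] E)‖ := by
    apply ciSup_le
    rintro ⟨p, q⟩
    dsimp only
    split
    · exact norm_nonneg _
    · rename_i hpq
      have hpq' : (p:E) ≠ (q:E) := Subtype.coe_injective.ne hpq
      have hd : (0:ℝ) < dist (e p) (e q) := by
        rw [dist_pos]; exact fun h => hpq' (e.injective h)
      rw [div_le_iff₀ hd]
      rw [Subtype.dist_eq, dist_eq_norm, dist_eq_norm]
      calc ‖(p:E) - q‖ = ‖e.symm (e ((p:E) - q))‖ := by rw [e.symm_apply_apply]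
        _ = ‖e.symm ((e p) - (e q))‖ := by rw [map_sub]
        _ ≤ ‖(e.symm : F →L[ℝ] E)‖ * ‖(e p) - (e q)‖ := (e.symm : F →L[ℝ] E).le_opNorm _
  exact mul_le_mul hlip hcolip (Real.iSup_nonneg fun p => by split <;> positivity) (norm_nonneg _)

end upper



lemma exists_bad_quadruple {E : Type*} [NormedAddCommGroup E] [NormedSpace ℝ E]
    (h : ¬ ∀ x y : E, ‖x + y‖ * ‖x + y‖ + ‖x - y‖ * ‖x - y‖ = 2 * (‖x‖ * ‖x‖ + ‖y‖ * ‖y‖)) :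
    ∃ a b c d : E, a ≠ b ∧ a ≠ c ∧ a ≠ d ∧ b ≠ c ∧ b ≠ d ∧ c ≠ d ∧
      dist a b ^ 2 + dist b c ^ 2 + dist c d ^ 2 + dist d a ^ 2 <
        dist a c ^ 2 + dist b d ^ 2 := by
  push_neg at h
  obtain ⟨u, v, huv⟩ := h
  have h2u : ∀ w : E, ‖w + w‖ = 2 * ‖w‖ := fun w => by
    rw [← two_smul ℝ w, norm_smul]; simp
  have hself : ∀ w : E, w ≠ 0 → w ≠ -w := by
    intro w hw he
    apply hw
    have h0 : w + w = 0 := by nth_rewrite 2 [he]; simp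
    have : (2:ℝ) • w = 0 := by rw [two_smul]; exact h0
    simpa using (smul_eq_zero.mp this).resolve_left (by norm_num)
  rcases lt_or_gt_of_ne huv with hlt | hgt
  · -- use (u, v, -u, -v)
    have hu0 : u ≠ 0 := by
      rintro rfl; simp only [zero_add, zero_sub, norm_neg, norm_zero] at hlt; nlinarith
    have hv0 : v ≠ 0 := by
      rintro rfl; simp only [add_zero, sub_zero, norm_zero] at hlt; nlinarith
    have huvne : u ≠ v := by
      rintro rfl; rw [sub_self, norm_zero, h2u u] at hlt; nlinarith
    have huvne' : u ≠ -v := by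
      intro he
      have hv : v = -u := by rw [he]; simp
      rw [hv] at hlt
      rw [add_neg_cancel, norm_zero, sub_neg_eq_add, h2u u, norm_neg] at hlt
      nlinarith
    refine ⟨u, v, -u, -v, huvne, hself u hu0, huvne', ?_, hself v hv0, ?_, ?_⟩
    · intro he; exact huvne' (by rw [he, neg_neg])
    · intro he; exact huvne (neg_injective he)
    · -- the inequality
      have d1 : dist u v = ‖u - v‖ := dist_eq_norm u v
      have d2 : dist v (-u) = ‖u + v‖ := by
        rw [dist_eq_norm, sub_neg_eq_add, add_comm]
      have d3 : dist (-u) (-v) = ‖u - v‖ := by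
        rw [dist_eq_norm]
        have : -u - -v = -(u - v) := by abel
        rw [this, norm_neg]
      have d4 : dist (-v) u = ‖u + v‖ := by
        rw [dist_eq_norm]
        have : -v - u = -(u + v) := by abel
        rw [this, norm_neg]
      have d5 : dist u (-u) = 2 * ‖u‖ := by
        rw [dist_eq_norm, sub_neg_eq_add, h2u]
      have d6 : dist v (-v) = 2 * ‖v‖ := by
        rw [dist_eq_norm, sub_neg_eq_add, h2u]
      rw [d1, d2, d3, d4, d5, d6]
      nlinarith
  · -- use (0, u, u+v, v)
    have hu0 : u ≠ 0 := by
      rintro rfl; simp only [zero_add, zero_sub, norm_neg, norm_zero] at hgt; nlinarith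
    have hv0 : v ≠ 0 := by
      rintro rfl; simp only [add_zero, sub_zero, norm_zero] at hgt; nlinarith
    have huvne : u ≠ v := by
      rintro rfl; rw [sub_self, norm_zero, h2u u] at hgt; nlinarith
    have hsum0 : u + v ≠ 0 := by
      intro he
      have hv : v = -u := by linear_combination (norm := module) he
      rw [hv] at hgt
      rw [add_neg_cancel, norm_zero, sub_neg_eq_add, h2u u, norm_neg] at hgt
      nlinarith
    refine ⟨0, u, u + v, v, Ne.symm hu0, Ne.symm hsum0, Ne.symm hv0, ?_, huvne, ?_, ?_⟩
    · intro he; exact hv0 (by linear_combination (norm := module) he.symm)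
    · intro he; exact hu0 (by linear_combination (norm := module) he)
    · have d1 : dist 0 u = ‖u‖ := by rw [dist_eq_norm, zero_sub, norm_neg]
      have d2 : dist u (u + v) = ‖v‖ := by
        rw [dist_eq_norm]
        have : u - (u + v) = -v := by abel
        rw [this, norm_neg]
      have d3 : dist (u + v) v = ‖u‖ := by
        rw [dist_eq_norm]
        have : u + v - v = u := by abel
        rw [this]
      have d4 : dist v 0 = ‖v‖ := by rw [dist_eq_norm, sub_zero]
      have d5 : dist 0 (u + v) = ‖u + v‖ := by rw [dist_eq_norm, zero_sub, norm_neg]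
      have d6 : dist u v = ‖u - v‖ := dist_eq_norm u v
      rw [d1, d2, d3, d4, d5, d6]
      nlinarith

-- coordinate attaining sup distance in Pi space
lemma exists_coord {n : ℕ} (hn : 0 < n) (X Y : Fin n → ℝ) :
    ∃ i, dist X Y ≤ dist (X i) (Y i) := by
  obtain ⟨i, -, hi⟩ := Finset.exists_mem_eq_sup (Finset.univ : Finset (Fin n))
    ⟨⟨0, hn⟩, Finset.mem_univ _⟩ (fun b => nndist (X b) (Y b))
  refine ⟨i, le_of_eq ?_⟩
  rw [dist_nndist, dist_nndist, nndist_pi_def, hi]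

-- distinct naturals are ≥ 1 apart as reals
lemma nat_cast_gap {a b : ℕ} (h : a ≠ b) : 1 ≤ |(a:ℝ) - (b:ℝ)| := by
  rcases lt_or_gt_of_ne h with hl | hl
  · have h1 : ((a:ℝ)) < (b:ℝ) := by exact_mod_cast hl
    have h2 : (a:ℝ) + 1 ≤ b := by exact_mod_cast Nat.succ_le_of_lt hl
    rw [abs_sub_comm, abs_of_nonneg (by linarith)]
    linarith
  · have h1 : ((b:ℝ)) < (a:ℝ) := by exact_mod_cast hl
    have h2 : (b:ℝ) + 1 ≤ a := by exact_mod_cast Nat.succ_le_of_lt hl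
    rw [abs_of_nonneg (by linarith)]
    linarith


lemma pair_sign {a a' m M : ℝ} (ha : |a| ≤ M) (ha' : |a'| ≤ M)
    (h : m + M ≤ |a - a'|) : (m ≤ a ∧ a' ≤ -m) ∨ (a ≤ -m ∧ m ≤ a') := by
  obtain ⟨ha1, ha2⟩ := abs_le.mp ha
  obtain ⟨ha'1, ha'2⟩ := abs_le.mp ha'
  rcases le_or_gt 0 (a - a') with hs | hs
  · rw [abs_of_nonneg hs] at h
    exact Or.inl ⟨by linarith, by linarith⟩
  · rw [abs_of_neg hs] at h
    exact Or.inr ⟨by linarith, by linarith⟩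

lemma cross_abs {a b m1 m2 : ℝ} (h1 : m1 ≤ a) (h2 : b ≤ -m2) : m1 + m2 ≤ |a - b| :=
  le_trans (by linarith) (le_abs_self _)

lemma mini_a {W x : ℝ} (h : W^2 = 4 + x^2) (h0 : 0 ≤ W) : 2 ≤ W := by
  nlinarith [sq_nonneg x]

lemma mini_b {W tj tk : ℝ} (h : W^2 = 4 + (tj+tk)^2) (h1 : 0 ≤ tj) (h2 : tj ≤ 1/2)
    (h3 : 0 ≤ tk) (h4 : tk ≤ 1/2) : W^2 ≤ 5 := by nlinarith

lemma mini_c {L C ε ν : ℝ} (hL0 : 0 < L) (hC0 : 0 < C) (hε0 : 0 < ε) (hεs : ε ≤ 1/4000)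
    (hLC : L * C < 1 + ε) (hν1 : 1 ≤ ν) (hν2 : ν ≤ 5/4) : L*ν*C < 2*ν := by
  nlinarith [mul_pos hL0 hC0]

lemma mini_d {L C ε νj νk s : ℝ} (hL0 : 0 < L) (hC0 : 0 < C) (hε0 : 0 < ε) (hεs : ε ≤ 1/4000)
    (hLC : L * C < 1 + ε) (hνj1 : 1 ≤ νj) (hνk1 : 1 ≤ νk) (hνj2 : νj ≤ 5/4) (hνk2 : νk ≤ 5/4)
    (hs0 : 0 ≤ s) (hs2 : s ≤ 1/2) :
    0 < 2*νj + 2*νk - L*C*νj - L*C*νk - L*s*C := by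
  have h1 : L*s*C ≤ L*C*(1/2) := by nlinarith [mul_pos hL0 hC0]
  nlinarith [mul_pos hL0 hC0]

lemma mini_f {LC ε ν W : ℝ} (h1 : 2*ν - LC*ν ≤ LC*W) (h2 : LC < 1+ε) (hν : 2 ≤ ν)
    (hW : 2 ≤ W) (hLC0 : 0 < LC) : (1-ε)*ν < (1+ε)*W := by nlinarith

lemma mini_m3 {P Q s : ℝ} (hP : P^2 = Q^2 + s^2) (hQ1 : 1 ≤ Q) (hQ2 : Q ≤ 5/4)
    (hP1 : 1 ≤ P) (hP2 : P ≤ 25/16) : Q + s^2/4 ≤ P := by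
  nlinarith [sq_nonneg s]

lemma mini_m5 {ε : ℝ} (h0 : 0 < ε) (hs : ε ≤ 1/4000) : 1/2 ≤ (1-ε)^2 := by nlinarith

set_option maxHeartbeats 1000000 in
/-- The core real-arithmetic contradiction for Case A. -/
lemma caseA_arith {L C ε νj νk tj tk s W A A' B B' N : ℝ}
    (hL0 : 0 < L) (hC0 : 0 < C) (hε0 : 0 < ε) (hεs : ε ≤ 1/4000)
    (hN : 2 ≤ N)
    (hεeq : ε * (1000*N^2) = 1)
    (hνjsq : νj^2 = 1 + tj^2) (hνksq : νk^2 = 1 + tk^2)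
    (htj : 0 ≤ tj) (htj2 : tj ≤ 1/2) (htk : 0 ≤ tk) (htk2 : tk ≤ 1/2)
    (hssq : s^2 = (tj - tk)^2) (hs1 : 1/(2*N) ≤ s) (hs2 : s ≤ 1/2)
    (hWsq : W^2 = 4 + (tj+tk)^2) (hW0 : 0 ≤ W)
    (hνj1 : 1 ≤ νj) (hνj2 : νj ≤ 5/4) (hνk1 : 1 ≤ νk) (hνk2 : νk ≤ 5/4)
    (hAb : |A| ≤ L * νj) (hA'b : |A'| ≤ L * νj)
    (hBb : |B| ≤ L * νk) (hB'b : |B'| ≤ L * νk)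
    (hAA' : 2*νj ≤ C * |A - A'|) (hBB' : 2*νk ≤ C * |B - B'|)
    (hABs : |A - B| ≤ L * s) (hAB' : |A - B'| ≤ L * W) (hA'B : |A' - B| ≤ L * W)
    (hLC : L * C < 1 + ε) : False := by
  have hN0 : (0:ℝ) < N := by linarith
  have hs0 : (0:ℝ) ≤ s := le_trans (by positivity) hs1
  have hW2 : 2 ≤ W := mini_a hWsq hW0
  have hWle : W^2 ≤ 5 := mini_b hWsq htj htj2 htk htk2
  have hmjpos : 0 < 2*νj/C - L*νj := by
    rw [sub_pos, lt_div_iff₀ hC0]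
    exact mini_c hL0 hC0 hε0 hεs hLC hνj1 hνj2
  have hmkpos : 0 < 2*νk/C - L*νk := by
    rw [sub_pos, lt_div_iff₀ hC0]
    exact mini_c hL0 hC0 hε0 hεs hLC hνk1 hνk2
  have hAA'2 : (2*νj/C - L*νj) + L*νj ≤ |A - A'| := by
    have h1 : 2*νj/C ≤ |A - A'| := by
      rw [div_le_iff₀ hC0]
      linarith [mul_comm C (|A - A'|)]
    linarith
  have hBB'2 : (2*νk/C - L*νk) + L*νk ≤ |B - B'| := by
    have h1 : 2*νk/C ≤ |B - B'| := by
      rw [div_le_iff₀ hC0]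
      linarith [mul_comm C (|B - B'|)]
    linarith
  have hsignA := pair_sign hAb hA'b hAA'2
  have hsignB := pair_sign hBb hB'b hBB'2
  have hmixsmall : L * s < (2*νj/C - L*νj) + (2*νk/C - L*νk) := by
    rw [← sub_pos]
    have hexp : ((2*νj/C - L*νj) + (2*νk/C - L*νk) - L*s)*C
        = 2*νj + 2*νk - L*C*νj - L*C*νk - L*s*C := by
      field_simp; ring
    have hpos : 0 < (2*νj + 2*νk - L*C*νj - L*C*νk - L*s*C) :=
      mini_d hL0 hC0 hε0 hεs hLC hνj1 hνk1 hνj2 hνk2 hs0 hs2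
    by_contra hcon
    push_neg at hcon
    have h3 : ((2*νj/C - L*νj) + (2*νk/C - L*νk) - L*s)*C ≤ 0 :=
      mul_nonpos_iff.mpr (Or.inr ⟨hcon, hC0.le⟩)
    rw [hexp] at h3
    linarith
  have hkey : (2*νj/C - L*νj) + (2*νk/C - L*νk) ≤ L * W := by
    rcases hsignA with ⟨hA1, hA2⟩ | ⟨hA1, hA2⟩ <;> rcases hsignB with ⟨hB1, hB2⟩ | ⟨hB1, hB2⟩
    · exact le_trans (cross_abs hA1 hB2) hAB'
    · exfalso
      have h1 := cross_abs hA1 hB1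
      linarith
    · exfalso
      have h1 := cross_abs hB1 hA1
      rw [abs_sub_comm] at h1
      linarith
    · exact le_trans (cross_abs hA2 hB1) hA'B
  have hkeyC : 2*(νj+νk) - L*C*(νj+νk) ≤ L*C*W := by
    have h1 := mul_le_mul_of_nonneg_right hkey hC0.le
    have e1 : ((2*νj/C - L*νj) + (2*νk/C - L*νk))*C
        = 2*(νj+νk) - L*C*(νj+νk) := by field_simp
    have e2 : (L*W)*C = L*C*W := by ring
    linarith
  have hLC0 : 0 < L*C := mul_pos hL0 hC0
  have hνsum : 2 ≤ νj + νk := by linarith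
  have hstep1 : (1-ε)*(νj+νk) < (1+ε)*W := mini_f hkeyC hLC hνsum hW2 hLC0
  have h0 : 0 ≤ (1-ε)*(νj+νk) := mul_nonneg (by linarith) (by linarith)
  have hsq : ((1-ε)*(νj+νk))^2 ≤ ((1+ε)*W)^2 := pow_le_pow_left₀ h0 hstep1.le 2
  have hfin1 : (1-ε)^2 * ((νj+νk)^2) ≤ (1+ε)^2 * W^2 := by
    have e1 : ((1-ε)*(νj+νk))^2 = (1-ε)^2 * ((νj+νk)^2) := by ring
    have e2 : ((1+ε)*W)^2 = (1+ε)^2 * W^2 := by ring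
    linarith
  -- (νj+νk)² ≥ W² + s²/2
  have hprodsq : (νj*νk)^2 = (1 + tj * tk)^2 + s^2 := by
    have e1 : (νj*νk)^2 = νj^2 * νk^2 := by ring
    rw [e1, hνjsq, hνksq, hssq]; ring
  have hQ1 : (1:ℝ) ≤ 1 + tj * tk := by linarith [mul_nonneg htj htk]
  have hQ2 : 1 + tj * tk ≤ 5/4 := by
    have := mul_le_mul htj2 htk2 htk (by norm_num : (0:ℝ) ≤ 1/2)
    linarith
  have hP1 : (1:ℝ) ≤ νj * νk := by
    have := mul_le_mul hνj1 hνk1 (by norm_num) (by linarith)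
    linarith
  have hP2 : νj * νk ≤ 25/16 := by
    have := mul_le_mul hνj2 hνk2 (by linarith) (by norm_num)
    linarith
  have hprod : (1 + tj * tk) + s^2/4 ≤ νj * νk := mini_m3 hprodsq hQ1 hQ2 hP1 hP2
  have hsumsq : W^2 + s^2/2 ≤ (νj + νk)^2 := by
    have e1 : (νj + νk)^2 = νj^2 + νk^2 + 2*(νj*νk) := by ring
    rw [e1, hνjsq, hνksq, hWsq]
    have e2 : (tj+tk)^2 = tj^2 + 2*(tj*tk) + tk^2 := by ring
    linarith [hprod, e2]
  have hfin2 : (1-ε)^2 * (W^2 + s^2/2) ≤ (1+ε)^2*W^2 :=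
    le_trans (mul_le_mul_of_nonneg_left hsumsq (sq_nonneg _)) hfin1
  have hfin3 : (1-ε)^2 * (s^2/2) ≤ 4*ε*W^2 := by
    have e1 : (1-ε)^2*(W^2+s^2/2) = (1-ε)^2*W^2 + (1-ε)^2*(s^2/2) := by ring
    have e2 : (1+ε)^2*W^2 - (1-ε)^2*W^2 = 4*ε*W^2 := by ring
    linarith
  have hfin4 : 4*ε*W^2 ≤ 20*ε := by
    have h1 := mul_le_mul_of_nonneg_left hWle (by linarith : (0:ℝ) ≤ 4*ε)
    linarith
  have hfin5 : (1/2:ℝ) ≤ (1-ε)^2 := mini_m5 hε0 hεs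
  have hfin6 : s^2 ≤ 80*ε := by
    have h1 := mul_le_mul_of_nonneg_right hfin5 (by positivity : (0:ℝ) ≤ s^2/2)
    linarith
  have hNsq : (0:ℝ) < N^2 := by positivity
  have hs1'' : (1:ℝ) ≤ 4*N^2 * s^2 := by
    have hsq0 : (1/(2*N))^2 ≤ s^2 := pow_le_pow_left₀ (by positivity) hs1 2
    have h3 : (1/(2*N))^2 * (4*N^2) = 1 := by field_simp; ring
    have h4 := mul_le_mul_of_nonneg_right hsq0 (by positivity : (0:ℝ) ≤ 4*N^2)
    calc (1:ℝ) = (1/(2*N))^2 * (4*N^2) := h3.symm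
      _ ≤ s^2 * (4*N^2) := h4
      _ = 4*N^2*s^2 := by ring
  have h5 := mul_le_mul_of_nonneg_left hfin6 (by positivity : (0:ℝ) ≤ 4*N^2)
  have h6 : 4*N^2*(80*ε) = (320/1000)*(ε*(1000*N^2)) := by ring
  rw [h6, hεeq] at h5
  linarith

section caseA
variable {E : Type*} [NormedAddCommGroup E] [NormedSpace ℝ E] [FiniteDimensional ℝ E]

lemma caseA_setup (n : ℕ) (hn : Module.finrank ℝ E = n) (hd : 2 ≤ n)
    (hP : ∀ x y : E, ‖x + y‖ * ‖x + y‖ + ‖x - y‖ * ‖x - y‖ = 2 * (‖x‖ * ‖x‖ + ‖y‖ * ‖y‖)) :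
    ∃ x : Fin (n + 1) → E, ∃ t : Fin (n + 1) → ℝ,
      (∀ j, ‖x j‖ ^ 2 = 1 + t j ^ 2) ∧
      (∀ j k, ‖x j - x k‖ = |t j - t k|) ∧
      (∀ j k, ‖x j + x k‖ ^ 2 = 4 + (t j + t k) ^ 2) ∧
      (∀ j, 0 ≤ t j ∧ t j ≤ 1/2) ∧
      (∀ j k, j ≠ k → 1 / (2 * (n : ℝ)) ≤ |t j - t k|) := by
  letI : InnerProductSpace ℝ E := InnerProductSpace.ofNorm ℝ hP
  have hn0 : 0 < Module.finrank ℝ E := by omega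
  have hn1 : 1 < Module.finrank ℝ E := by omega
  let B := stdOrthonormalBasis ℝ E
  have horth := B.orthonormal
  let u : E := B ⟨0, hn0⟩
  let w : E := B ⟨1, hn1⟩
  have hu : ‖u‖ = 1 := horth.1 _
  have hw : ‖w‖ = 1 := horth.1 _
  have huw : (inner ℝ u w : ℝ) = 0 := horth.2 (by simp : (⟨0, hn0⟩ : Fin (Module.finrank ℝ E)) ≠ ⟨1, hn1⟩)
  refine ⟨fun j => u + ((j : ℝ) / (2 * n)) • w, fun j => (j : ℝ) / (2 * n), ?_, ?_, ?_, ?_, ?_⟩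
  · intro j
    set t := ((j : ℝ) / (2 * n)) with ht
    rw [norm_add_sq_real, real_inner_smul_right, huw, norm_smul, hu, hw]
    simp [sq_abs]
  · intro j k
    set tj := ((j : ℝ) / (2 * n)); set tk := ((k : ℝ) / (2 * n))
    have : (u + tj • w) - (u + tk • w) = (tj - tk) • w := by module
    rw [this, norm_smul, hw]
    simp
    rfl
  · intro j k
    set tj := ((j : ℝ) / (2 * n)); set tk := ((k : ℝ) / (2 * n))
    have h2 : (u + tj • w) + (u + tk • w) = (2:ℝ) • u + (tj + tk) • w := by module
    rw [h2, norm_add_sq_real, real_inner_smul_left, real_inner_smul_right, huw, norm_smul,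
      norm_smul, hu, hw]
    simp only [mul_zero, Real.norm_ofNat, Real.norm_eq_abs, mul_one]
    rw [sq_abs]
    norm_num
    rfl
  · intro j
    constructor
    · positivity
    · have hj : (j : ℝ) ≤ n := by
        have := j.isLt
        have : (j : ℕ) ≤ n := by omega
        exact_mod_cast this
      rw [div_le_iff₀ (by positivity)]
      linarith
  · intro j k hjk
    have hne : (j : ℕ) ≠ (k : ℕ) := fun h => hjk (Fin.ext h)
    have hgap : 1 ≤ |(j:ℝ) - (k:ℝ)| := nat_cast_gap hne
    have : ((j : ℝ) / (2*n)) - ((k : ℝ) / (2*n)) = ((j:ℝ) - (k:ℝ)) / (2*n) := by ring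
    rw [this, abs_div, abs_of_nonneg (by positivity : (0:ℝ) ≤ 2*(n:ℝ))]
    rw [div_le_div_iff₀ (by positivity) (by positivity)]
    nlinarith [hgap]
end caseA

section caseAmain
variable {E : Type*} [NormedAddCommGroup E] [NormedSpace ℝ E] [FiniteDimensional ℝ E]

set_option maxHeartbeats 1000000 in
lemma caseA_lower (n : ℕ) (hn : Module.finrank ℝ E = n) (hd : 2 ≤ n)
    (hP : ∀ x y : E, ‖x + y‖ * ‖x + y‖ + ‖x - y‖ * ‖x - y‖ = 2 * (‖x‖ * ‖x‖ + ‖y‖ * ‖y‖)) :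
    ∃ ε : ℝ, 0 < ε ∧ ∃ S : Set E, S.Finite ∧ S.Nonempty ∧
      ∀ f : S → (Fin n → ℝ), Function.Injective f →
        1 + ε ≤ distortion f := by
  obtain ⟨x, t, hxn, hxsub, hxadd, htb, htgap⟩ := caseA_setup n hn hd hP
  have hn0 : 0 < n := by omega
  have hnr : (2:ℝ) ≤ (n:ℝ) := by exact_mod_cast hd
  -- basic facts about the norms
  have hν1 : ∀ j, 1 ≤ ‖x j‖ := by
    intro j
    nlinarith [hxn j, norm_nonneg (x j), sq_nonneg (t j)]
  have hν2 : ∀ j, ‖x j‖ ≤ 5/4 := by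
    intro j
    nlinarith [hxn j, norm_nonneg (x j), (htb j).1, (htb j).2]
  have hx0 : ∀ j, x j ≠ 0 := by
    intro j h
    have := hν1 j
    rw [h, norm_zero] at this
    linarith
  have hxne : ∀ j k, j ≠ k → x j ≠ x k := by
    intro j k hjk h
    have h1 := htgap j k hjk
    have h2 := hxsub j k
    rw [h, sub_self, norm_zero] at h2
    have : (0:ℝ) < 1 / (2*(n:ℝ)) := by positivity
    rw [← h2] at h1
    linarith
  have hxnen : ∀ j k, x j ≠ -x k := by
    intro j k h
    have h1 := hxadd j k
    have h2 : x j + x k = 0 := by rw [h]; simp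
    rw [h2, norm_zero] at h1
    nlinarith [sq_nonneg (t j + t k)]
  -- the subset
  set S : Set E := insert 0 (Set.range x ∪ Set.range (fun j => -x j)) with hS
  have hSfin : S.Finite :=
    ((Set.finite_range x).union (Set.finite_range _)).insert 0
  refine ⟨1/(1000*(n:ℝ)^2), by positivity, S, hSfin, ⟨0, Set.mem_insert _ _⟩, ?_⟩
  intro f hf
  haveI : Finite ↥S := hSfin.to_subtype
  set ε : ℝ := 1/(1000*(n:ℝ)^2) with hε
  have hε0 : 0 < ε := by positivity
  have hεsmall : ε ≤ 1/4000 := by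
    rw [hε, div_le_div_iff₀ (by positivity) (by norm_num)]
    nlinarith [hnr]
  -- subtype elements
  have hmz : (0:E) ∈ S := Set.mem_insert _ _
  have hmp : ∀ j, x j ∈ S := fun j => Set.mem_insert_iff.mpr
    (Or.inr (Set.mem_union_left _ ⟨j, rfl⟩))
  have hmq : ∀ j, -x j ∈ S := fun j => Set.mem_insert_iff.mpr
    (Or.inr (Set.mem_union_right _ ⟨j, rfl⟩))
  set z : ↥S := ⟨0, hmz⟩ with hz
  set p : Fin (n+1) → ↥S := fun j => ⟨x j, hmp j⟩ with hp
  set q : Fin (n+1) → ↥S := fun j => ⟨-x j, hmq j⟩ with hq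
  have hpz : ∀ j, p j ≠ z := fun j h => hx0 j (congrArg Subtype.val h)
  have hqz : ∀ j, q j ≠ z := fun j h => hx0 j (neg_eq_zero.mp (congrArg Subtype.val h))
  have hpq : ∀ j k, p j ≠ q k := fun j k h => hxnen j k (congrArg Subtype.val h)
  have hqp : ∀ j k, q j ≠ p k := fun j k h => hxnen k j ((congrArg Subtype.val h).symm)
  have hpp : ∀ j k, j ≠ k → p j ≠ p k := fun j k hjk h =>
    hxne j k hjk (congrArg Subtype.val h)
  -- L and C
  set L := lipNorm f with hL
  set C := colipNorm f with hC
  show 1 + ε ≤ distortion f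
  have hdist : distortion f = L * C := rfl
  rw [hdist]
  -- L, C positive
  have hL0 : 0 < L := by
    have h1 := dist_le_lip f (hpz ⟨0, by omega⟩)
    have h2 : (0:ℝ) < dist (f (p ⟨0, by omega⟩)) (f z) :=
      dist_pos.mpr fun h => (hpz ⟨0, by omega⟩) (hf h)
    have h3 : dist (p ⟨0, by omega⟩) z = ‖x ⟨0, by omega⟩‖ := by
      rw [Subtype.dist_eq]; exact dist_zero_right _
    rw [h3] at h1
    nlinarith [hν2 ⟨0, by omega⟩, hν1 ⟨0, by omega⟩]
  have hC0 : 0 < C := by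
    have h1 := dist_le_colip f hf (hpz ⟨0, by omega⟩)
    have h3 : dist (p ⟨0, by omega⟩) z = ‖x ⟨0, by omega⟩‖ := by
      rw [Subtype.dist_eq]; exact dist_zero_right _
    rw [h3] at h1
    have h2 : (0:ℝ) ≤ dist (f (p ⟨0, by omega⟩)) (f z) := dist_nonneg
    nlinarith [hν1 ⟨0, by omega⟩]
  by_contra hcon
  push_neg at hcon
  -- choose coordinates
  have hcoord : ∀ j : Fin (n+1), ∃ i : Fin n,
      dist (f (p j)) (f (q j)) ≤ dist (f (p j) i) (f (q j) i) :=
    fun j => exists_coord hn0 _ _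
  choose ℓ hℓ using hcoord
  obtain ⟨j, k, hjk, hℓjk⟩ := Fintype.exists_ne_map_eq_of_card_lt ℓ (by simp)
  set i := ℓ j with hi
  -- coordinate values
  set A : ℝ := f (p j) i - f z i with hA
  set A' : ℝ := f (q j) i - f z i with hA'
  set B : ℝ := f (p k) i - f z i with hB
  set B' : ℝ := f (q k) i - f z i with hB'
  -- bounds |A| ≤ L νj etc.
  have habs : ∀ (m : ↥S) (ν : ℝ), m ≠ z → dist (m : E) 0 = ν →
      |(f m i - f z i)| ≤ L * ν := by
    intro m ν hmz hν
    have h1 : |(f m i - f z i)| = dist (f m i) (f z i) := (Real.dist_eq _ _).symm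
    rw [h1]
    calc dist (f m i) (f z i) ≤ dist (f m) (f z) := dist_le_pi_dist _ _ i
      _ ≤ L * dist m z := dist_le_lip f hmz
      _ = L * ν := by rw [Subtype.dist_eq, hν]
  have hAb : |A| ≤ L * ‖x j‖ := habs (p j) _ (hpz j) (dist_zero_right _)
  have hA'b : |A'| ≤ L * ‖x j‖ := by
    have := habs (q j) ‖x j‖ (hqz j) (by rw [dist_zero_right, norm_neg])
    exact this
  have hBb : |B| ≤ L * ‖x k‖ := habs (p k) _ (hpz k) (dist_zero_right _)
  have hB'b : |B'| ≤ L * ‖x k‖ := habs (q k) ‖x k‖ (hqz k) (by rw [dist_zero_right, norm_neg])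
  -- antipodal separation
  have hanti : ∀ (m : Fin (n+1)) (V V' : ℝ), V = f (p m) i - f z i → V' = f (q m) i - f z i →
      ℓ m = i → 2 * ‖x m‖ ≤ C * |V - V'| := by
    intro m V V' hV hV' hℓm
    have h1 : dist (p m) (q m) = 2 * ‖x m‖ := by
      rw [Subtype.dist_eq, dist_eq_norm]
      have h2 : x m - - x m = (2:ℝ) • x m := by module
      rw [h2, norm_smul]
      simp
    have h3 := dist_le_colip f hf (hpq m m)
    rw [h1] at h3
    have h4 : dist (f (p m) i) (f (q m) i) = |V - V'| := by
      rw [Real.dist_eq, hV, hV']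
      ring_nf
    have h5 : dist (f (p m)) (f (q m)) ≤ |V - V'| := by
      rw [← h4, ← hℓm]
      exact hℓ m
    calc 2 * ‖x m‖ ≤ C * dist (f (p m)) (f (q m)) := h3
      _ ≤ C * |V - V'| := mul_le_mul_of_nonneg_left h5 hC0.le
  have hAA' : 2 * ‖x j‖ ≤ C * |A - A'| := hanti j A A' hA hA' hi.symm
  have hBB' : 2 * ‖x k‖ ≤ C * |B - B'| := hanti k B B' hB hB' hℓjk.symm
  -- cross bounds
  have hcross : ∀ (m m' : ↥S) (V V' W : ℝ), m ≠ m' → V = f m i - f z i →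
      V' = f m' i - f z i → dist (m : E) (m' : E) = W → |V - V'| ≤ L * W := by
    intro m m' V V' W hne hV hV' hW
    have h4 : |V - V'| = dist (f m i) (f m' i) := by rw [Real.dist_eq, hV, hV']; ring_nf
    rw [h4]
    calc dist (f m i) (f m' i) ≤ dist (f m) (f m') := dist_le_pi_dist _ _ i
      _ ≤ L * dist m m' := dist_le_lip f hne
      _ = L * W := by rw [Subtype.dist_eq, hW]
  have hABs : |A - B| ≤ L * |t j - t k| := by
    refine hcross (p j) (p k) A B _ (hpp j k hjk) hA hB ?_
    rw [dist_eq_norm]; exact hxsub j k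
  have hAB' : |A - B'| ≤ L * ‖x j + x k‖ := by
    refine hcross (p j) (q k) A B' _ (hpq j k) hA hB' ?_
    rw [dist_eq_norm, sub_neg_eq_add]
  have hA'B : |A' - B| ≤ L * ‖x j + x k‖ := by
    refine hcross (q j) (p k) A' B _ (hqp j k) hA' hB ?_
    rw [dist_eq_norm]
    have h2 : -x j - x k = -(x j + x k) := by module
    rw [h2, norm_neg]
  -- collect real facts and conclude via caseA_arith
  clear_value L C
  obtain ⟨νj, hνj⟩ : ∃ v : ℝ, ‖x j‖ = v := ⟨_, rfl⟩
  obtain ⟨νk, hνk⟩ : ∃ v : ℝ, ‖x k‖ = v := ⟨_, rfl⟩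
  obtain ⟨s, hs⟩ : ∃ v : ℝ, |t j - t k| = v := ⟨_, rfl⟩
  obtain ⟨W, hW⟩ : ∃ v : ℝ, ‖x j + x k‖ = v := ⟨_, rfl⟩
  rw [hνj] at hAb hA'b hAA'
  rw [hνk] at hBb hB'b hBB'
  rw [hs] at hABs
  rw [hW] at hAB' hA'B
  have hνj1 : 1 ≤ νj := hνj ▸ hν1 j
  have hνj2 : νj ≤ 5/4 := hνj ▸ hν2 j
  have hνk1 : 1 ≤ νk := hνk ▸ hν1 k
  have hνk2 : νk ≤ 5/4 := hνk ▸ hν2 k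
  have hνjsq : νj^2 = 1 + t j ^ 2 := by rw [← hνj]; exact hxn j
  have hνksq : νk^2 = 1 + t k ^ 2 := by rw [← hνk]; exact hxn k
  have hssq : s^2 = (t j - t k)^2 := by rw [← hs, sq_abs]
  have hs1 : 1/(2*(n:ℝ)) ≤ s := hs ▸ htgap j k hjk
  have hs2 : s ≤ 1/2 := by
    rw [← hs]
    rcases abs_cases (t j - t k) with ⟨he, -⟩ | ⟨he, -⟩ <;> rw [he] <;>
      linarith [(htb j).1, (htb j).2, (htb k).1, (htb k).2]
  have hWsq : W^2 = 4 + (t j + t k)^2 := by rw [← hW]; exact hxadd j k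
  have hW0 : 0 ≤ W := hW ▸ norm_nonneg _
  have hεeq : ε * (1000*((n:ℝ))^2) = 1 := by rw [hε]; field_simp
  exact caseA_arith hL0 hC0 hε0 hεsmall hnr hεeq hνjsq hνksq (htb j).1 (htb j).2
    (htb k).1 (htb k).2 hssq hs1 hs2 hWsq hW0 hνj1 hνj2 hνk1 hνk2
    hAb hA'b hBb hB'b hAA' hBB' hABs hAB' hA'B hcon
end caseAmain

/-- For a real normed space `E` of (finite) dimension `d ≥ 2`, the class of
finite subsets of `E` does not have the qualitative dichotomy property: there is a metric
space `H` such that `1 < sup {c_H S : S ⊆ E finite nonempty} < ∞` — the supremum is finite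
(all finite subsets embed with some uniformly bounded distortion `K`), yet it exceeds `1`
(some finite subset requires distortion at least `1 + ε` with `ε > 0`). -/
theorem finite_dim_no_dichotomy (E : Type*) [NormedAddCommGroup E] [NormedSpace ℝ E]
    [FiniteDimensional ℝ E] (hd : 2 ≤ Module.finrank ℝ E) :
    ∃ (H : Type) (iH : MetricSpace H),
      (∃ ε : ℝ, 0 < ε ∧ @someFiniteSubsetNeeds E _ H iH (1 + ε)) ∧
      (∃ K : ℝ, @embedsAllFiniteSubsetsWith E _ H iH K) := by
  by_cases hP : ∀ u v : E, ‖u + v‖ * ‖u + v‖ + ‖u - v‖ * ‖u - v‖ = 2 * (‖u‖ * ‖u‖ + ‖v‖ * ‖v‖)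
  · -- Case A: the norm comes from an inner product; use `ℓ∞` of the same dimension.
    refine ⟨Fin (Module.finrank ℝ E) → ℝ, inferInstance, ?_, ?_⟩
    · obtain ⟨ε, hε, S, h1, h2, h3⟩ := caseA_lower (Module.finrank ℝ E) rfl hd hP
      exact ⟨ε, hε, S, h1, h2, h3⟩
    · have e : E ≃L[ℝ] (Fin (Module.finrank ℝ E) → ℝ) :=
        LinearEquiv.toContinuousLinearEquiv (Module.finBasis ℝ E).equivFun
      refine ⟨‖(e : E →L[ℝ] (Fin (Module.finrank ℝ E) → ℝ))‖ *
        ‖(e.symm : (Fin (Module.finrank ℝ E) → ℝ) →L[ℝ] E)‖, ?_⟩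
      intro S _ hne
      exact ⟨fun s => e s, e.injective.comp Subtype.val_injective,
        distortion_restrict_le e S hne⟩
  · -- Case B: the parallelogram law fails; use Euclidean space of the same dimension.
    obtain ⟨a, b, c, d, hab, hac, had, hbc, hbd, hcd, hviol⟩ := exists_bad_quadruple hP
    refine ⟨EuclideanSpace ℝ (Fin (Module.finrank ℝ E)), inferInstance, ?_, ?_⟩
    · obtain ⟨ε, hε, S, h1, h2, h3⟩ :=
        caseB_lower (Module.finrank ℝ E) hab hac had hbc hbd hcd hviol
      exact ⟨ε, hε, S, h1, h2, h3⟩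
    · have e : E ≃L[ℝ] EuclideanSpace ℝ (Fin (Module.finrank ℝ E)) :=
        (LinearEquiv.toContinuousLinearEquiv (Module.finBasis ℝ E).equivFun).trans
          (PiLp.continuousLinearEquiv 2 ℝ (fun _ : Fin (Module.finrank ℝ E) => ℝ)).symm
      refine ⟨‖(e : E →L[ℝ] EuclideanSpace ℝ (Fin (Module.finrank ℝ E)))‖ *
        ‖(e.symm : EuclideanSpace ℝ (Fin (Module.finrank ℝ E)) →L[ℝ] E)‖, ?_⟩
      intro S _ hne
      exact ⟨fun s => e s, e.injective.comp Subtype.val_injective,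
        distortion_restrict_le e S hne⟩
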